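/- Let M be a positive integer, f : ℤ → ℂ an M-periodic function, F₀(t) = (Σ_{ℓ=1}^{M} f(ℓ) e^{-ℓt})/(1 - e^{-Mt}) its meromorphic generating function, and t_n := 2πi n/M for n ∈ ℤ. Then for every n ∈ ℤ: lim_{t→t_n} (t - t_n) · (F₀(t) + F₀(-t))/2 = M^{-1/2} (U_M f)^{od}(n) and lim_{t→t_n} (t - t_n) · (F₀(t) - F₀(-t))/2 = M^{-1/2} (U_M f)^{ev}(n), i.e. the residue of the even part of F₀ at t_n is M^{-1/2} f̂^{od}(n) and the residue of the odd part of F₀ at t_n is M^{-1/2} f̂^{ev}(n). -/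

import Mathlib

open Complex Filter

/-- The discrete Fourier transform of an `M`-periodic function `f : ℤ → ℂ`. -/
noncomputable def dft (M : ℕ) (f : ℤ → ℂ) (n : ℤ) : ℂ :=
  (Real.sqrt M : ℂ)⁻¹ * ∑ ℓ ∈ Finset.range M, f ℓ *
    Complex.exp (-2 * Real.pi * Complex.I * ℓ * n / M)

lemma aux_res (M : ℕ) (hM : 0 < M) (f : ℤ → ℂ) (hf : ∀ n : ℤ, f (n + M) = f n)
    (G : ℂ → ℂ)
    (hG : ∀ t : ℂ, G t =
      (∑ ℓ ∈ Finset.Icc 1 M, f ℓ * Complex.exp (-(ℓ : ℂ) * t)) /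
        (1 - Complex.exp (-(M : ℂ) * t)))
    (n : ℤ) :
    Filter.Tendsto (fun t : ℂ => (t - 2 * Real.pi * Complex.I * n / M) * G t)
      (nhdsWithin (2 * Real.pi * Complex.I * n / M) {(2 * Real.pi * Complex.I * n / M : ℂ)}ᶜ)
      (nhds ((Real.sqrt M : ℂ)⁻¹ * dft M f n)) := by
  have hMC : (M : ℂ) ≠ 0 := Nat.cast_ne_zero.2 hM.ne'
  set c : ℂ := 2 * Real.pi * Complex.I * n / M with hc
  have hexp : Complex.exp (-(M : ℂ) * c) = 1 := by
    have h1 : -(M : ℂ) * c = (-n : ℤ) * (2 * Real.pi * Complex.I) := by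
      push_cast; rw [hc]; field_simp
    rw [h1, Complex.exp_int_mul_two_pi_mul_I]
  -- derivative of denominator
  have hd : HasDerivAt (fun t : ℂ => 1 - Complex.exp (-(M : ℂ) * t)) (M : ℂ) c := by
    have h1 : HasDerivAt (fun t : ℂ => -(M : ℂ) * t) (-(M : ℂ)) c := by
      simpa using (hasDerivAt_id c).const_mul (-(M : ℂ))
    have h2 := h1.cexp
    have h3 := h2.const_sub 1
    have hexp' : Complex.exp (-((M : ℂ) * c)) = 1 := by rw [← neg_mul]; exact hexp
    simpa [neg_mul, hexp'] using h3
  have h1 : Tendsto (fun t : ℂ => (1 - Complex.exp (-(M : ℂ) * t)) / (t - c))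
      (nhdsWithin c {c}ᶜ) (nhds (M : ℂ)) := by
    have := hasDerivAt_iff_tendsto_slope.1 hd
    refine this.congr fun t => ?_
    rw [slope_def_field]
    simp [← neg_mul, hexp]
  have h2 : Tendsto (fun t : ℂ => (t - c) / (1 - Complex.exp (-(M : ℂ) * t)))
      (nhdsWithin c {c}ᶜ) (nhds ((M : ℂ)⁻¹)) := by
    have := h1.inv₀ hMC
    simpa [inv_div] using this
  -- numerator continuous
  set S : ℂ → ℂ := fun t => ∑ ℓ ∈ Finset.Icc 1 M, f ℓ * Complex.exp (-(ℓ : ℂ) * t) with hS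
  have hScont : Tendsto S (nhdsWithin c {c}ᶜ) (nhds (S c)) := by
    apply ContinuousWithinAt.tendsto
    apply Continuous.continuousWithinAt
    exact continuous_finset_sum _ fun ℓ _ => continuous_const.mul (Complex.continuous_exp.comp
      (continuous_const.mul continuous_id))
  have hmain : Tendsto (fun t : ℂ => (t - c) * G t) (nhdsWithin c {c}ᶜ)
      (nhds (S c * (M : ℂ)⁻¹)) := by
    have := hScont.mul h2
    refine this.congr fun t => ?_
    rw [hG t]; ring
  -- identify the limit
  have hSval : S c = ∑ ℓ ∈ Finset.range M, f ℓ *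
      Complex.exp (-2 * Real.pi * Complex.I * ℓ * n / M) := by
    have harg : ∀ ℓ : ℕ, Complex.exp (-(ℓ : ℂ) * c) =
        Complex.exp (-2 * Real.pi * Complex.I * ℓ * n / M) := by
      intro ℓ
      have : -(ℓ : ℂ) * c = -2 * Real.pi * Complex.I * ℓ * n / M := by rw [hc]; ring
      rw [this]
    set g : ℕ → ℂ := fun ℓ => f ℓ * Complex.exp (-2 * Real.pi * Complex.I * ℓ * n / M) with hg
    have hSg : S c = ∑ ℓ ∈ Finset.Icc 1 M, g ℓ := by
      simp only [hS, hg]; exact Finset.sum_congr rfl fun ℓ _ => by rw [harg ℓ]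
    have hgM : g M = g 0 := by
      have hfM : f M = f 0 := by simpa using hf 0
      have : Complex.exp (-2 * Real.pi * Complex.I * (M : ℂ) * n / M) = 1 := by
        have : (-2 : ℂ) * Real.pi * Complex.I * (M : ℂ) * n / M =
            (-n : ℤ) * (2 * Real.pi * Complex.I) := by push_cast; field_simp
        rw [this, Complex.exp_int_mul_two_pi_mul_I]
      simp only [hg]
      rw [this]
      simp [hfM]
    have hIcc : ∑ ℓ ∈ Finset.Icc 1 M, g ℓ = ∑ ℓ ∈ Finset.range M, g (ℓ + 1) := by
      rw [← Finset.Ico_add_one_right_eq_Icc, Finset.sum_Ico_eq_sum_range]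
      simp [add_comm]
    rw [hSg, hIcc]
    have h2 := Finset.sum_range_succ' g M
    rw [Finset.sum_range_succ g M, hgM] at h2
    exact (add_right_cancel h2.symm)
  have hfinal : (Real.sqrt M : ℂ)⁻¹ * dft M f n = S c * (M : ℂ)⁻¹ := by
    have hsq : ((Real.sqrt M : ℝ) : ℂ) * ((Real.sqrt M : ℝ) : ℂ) = (M : ℂ) := by
      rw [← Complex.ofReal_mul, Real.mul_self_sqrt (Nat.cast_nonneg M)]
      simp
    rw [dft, hSval, ← mul_assoc, ← mul_inv, hsq, mul_comm]
  rw [hfinal]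
  exact hmain

/-- At `t_n = 2πin/M`, the residue of the even part of
`F₀(t) = (Σ_{ℓ=1}^M f(ℓ)e^{-ℓt})/(1-e^{-Mt})` is `M^{-1/2} f̂^{od}(n)` and the residue of the
odd part is `M^{-1/2} f̂^{ev}(n)`, where `f̂ = U_M f` is the discrete Fourier transform. -/
theorem statement4 (M : ℕ) (hM : 0 < M) (f : ℤ → ℂ) (hf : ∀ n : ℤ, f (n + M) = f n)
    (G : ℂ → ℂ)
    (hG : ∀ t : ℂ, G t =
      (∑ ℓ ∈ Finset.Icc 1 M, f ℓ * Complex.exp (-(ℓ : ℂ) * t)) /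
        (1 - Complex.exp (-(M : ℂ) * t)))
    (n : ℤ) :
    Filter.Tendsto
      (fun t : ℂ => (t - 2 * Real.pi * Complex.I * n / M) * ((G t + G (-t)) / 2))
      (nhdsWithin (2 * Real.pi * Complex.I * n / M) {(2 * Real.pi * Complex.I * n / M : ℂ)}ᶜ)
      (nhds ((Real.sqrt M : ℂ)⁻¹ * ((dft M f n - dft M f (-n)) / 2))) ∧
    Filter.Tendsto
      (fun t : ℂ => (t - 2 * Real.pi * Complex.I * n / M) * ((G t - G (-t)) / 2))
      (nhdsWithin (2 * Real.pi * Complex.I * n / M) {(2 * Real.pi * Complex.I * n / M : ℂ)}ᶜ)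
      (nhds ((Real.sqrt M : ℂ)⁻¹ * ((dft M f n + dft M f (-n)) / 2))) := by
  set c : ℂ := 2 * Real.pi * Complex.I * n / M with hc
  have hA := aux_res M hM f hf G hG n
  have hdneg : (2 * Real.pi * Complex.I * ((-n : ℤ) : ℂ) / M) = -c := by
    rw [hc]; push_cast; ring
  have hnegmap : Tendsto (fun t : ℂ => -t) (nhdsWithin c {c}ᶜ)
      (nhdsWithin (-c) {(-c : ℂ)}ᶜ) := by
    rw [nhdsWithin, nhdsWithin]
    refine Tendsto.inf (continuous_neg.tendsto c) (tendsto_principal_principal.2 ?_)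
    intro t ht h
    exact ht (neg_injective h)
  have hB : Tendsto (fun t : ℂ => ((-t) - (-c)) * G (-t)) (nhdsWithin c {c}ᶜ)
      (nhds ((Real.sqrt M : ℂ)⁻¹ * dft M f (-n))) := by
    have := aux_res M hM f hf G hG (-n)
    rw [hdneg] at this
    exact this.comp hnegmap
  constructor
  · have h := (hA.add hB.neg).div_const 2
    have hval : ((Real.sqrt M : ℂ)⁻¹ * dft M f n + -((Real.sqrt M : ℂ)⁻¹ * dft M f (-n))) / 2
        = (Real.sqrt M : ℂ)⁻¹ * ((dft M f n - dft M f (-n)) / 2) := by ring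
    rw [← hval]
    exact h.congr fun t => by ring
  · have h := (hA.sub hB.neg).div_const 2
    have hval : ((Real.sqrt M : ℂ)⁻¹ * dft M f n - -((Real.sqrt M : ℂ)⁻¹ * dft M f (-n))) / 2
        = (Real.sqrt M : ℂ)⁻¹ * ((dft M f n + dft M f (-n)) / 2) := by ring
    rw [← hval]
    exact h.congr fun t => by ring
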